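/- A sub-execution of an SRC11-consistent execution is SRC11-consistent (the restriction case of Lemma A.1): let po ⊆ po', rf ⊆ rf', co ⊆ co', rmw ⊆ rmw' be binary relations on the event type E (with the location map loc, the scope-inclusion relation incl, and all event-classification predicates held fixed). If the primed execution (po',rf',co',rmw') satisfies the four SRC11 axioms — (Coherence) hb';eco'^? is irreflexive, (Atomicity) rmw' ∩ (fr';co') is empty, (SC) incl ∩ psc' is acyclic, (No-Thin-Air) po' ∪ rf' is acyclic — then the unprimed execution (po,rf,co,rmw) also satisfies all four axioms. -/

import Mathlib

namespace SRC11

variable {E Loc : Type*}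

/-- Relational composition `r;s`. -/
def rcomp (r s : E → E → Prop) : E → E → Prop := fun a c => ∃ b, r a b ∧ s b c
/-- Union of relations. -/
def runion (r s : E → E → Prop) : E → E → Prop := fun a b => r a b ∨ s a b
/-- Intersection of relations. -/
def rinter (r s : E → E → Prop) : E → E → Prop := fun a b => r a b ∧ s a b
/-- Inverse `r⁻¹`. -/
def rinv (r : E → E → Prop) : E → E → Prop := fun a b => r b a
/-- Identity relation restricted to a predicate: `[A]`. -/
def rid (A : E → Prop) : E → E → Prop := fun a b => a = b ∧ A a
/-- Reflexive closure `r^?`. -/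
def ropt (r : E → E → Prop) : E → E → Prop := fun a b => a = b ∨ r a b
/-- Transitive closure `r⁺`. -/
def rtrans (r : E → E → Prop) : E → E → Prop := Relation.TransGen r
/-- Reflexive-transitive closure `r^*`. -/
def rstar (r : E → E → Prop) : E → E → Prop := Relation.ReflTransGen r
/-- `r|loc` : restriction to same-location pairs. -/
def sameLoc (loc : E → Loc) (r : E → E → Prop) : E → E → Prop :=
  fun a b => r a b ∧ loc a = loc b
/-- `r|≠loc` : restriction to different-location pairs. -/
def diffLoc (loc : E → Loc) (r : E → E → Prop) : E → E → Prop :=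
  fun a b => r a b ∧ loc a ≠ loc b
/-- A relation is irreflexive. -/
def Irrefl (r : E → E → Prop) : Prop := ∀ a, ¬ r a a
/-- A relation is acyclic if its transitive closure is irreflexive. -/
def Acyclic (r : E → E → Prop) : Prop := Irrefl (rtrans r)

/-- from-read: `fr = rf⁻¹;co`. -/
def fr (rf co : E → E → Prop) : E → E → Prop := rcomp (rinv rf) co

/-- extended coherence order: `eco = (rf ∪ co ∪ fr)⁺`. -/
def eco (rf co : E → E → Prop) : E → E → Prop :=
  rtrans (runion rf (runion co (fr rf co)))

/-- release sequence: `rseq = [W];(po|loc)^?;[Wrlx];((incl ∩ rf);rmw)^*`. -/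
def rseq (loc : E → Loc) (W Wrlx : E → Prop) (incl po rf rmw : E → E → Prop) :
    E → E → Prop :=
  rcomp (rid W) (rcomp (ropt (sameLoc loc po))
    (rcomp (rid Wrlx) (rstar (rcomp (rinter incl rf) rmw))))

/-- `prel = [Erel];([F];po)^?`. -/
def prel (Erel F : E → Prop) (po : E → E → Prop) : E → E → Prop :=
  rcomp (rid Erel) (ropt (rcomp (rid F) po))

/-- `pacq = (po;[F])^?;[Eacq]`. -/
def pacq (Eacq F : E → Prop) (po : E → E → Prop) : E → E → Prop :=
  rcomp (ropt (rcomp po (rid F))) (rid Eacq)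

/-- synchronizes-with: `sw = prel;rseq;(incl ∩ rf);pacq`. -/
def sw (loc : E → Loc) (W Wrlx Erel Eacq F : E → Prop)
    (incl po rf rmw : E → E → Prop) : E → E → Prop :=
  rcomp (prel Erel F po) (rcomp (rseq loc W Wrlx incl po rf rmw)
    (rcomp (rinter incl rf) (pacq Eacq F po)))

/-- happens-before: `hb = (po ∪ (incl ∩ sw))⁺`. -/
def hb (loc : E → Loc) (W Wrlx Erel Eacq F : E → Prop)
    (incl po rf rmw : E → E → Prop) : E → E → Prop :=
  rtrans (runion po (rinter incl (sw loc W Wrlx Erel Eacq F incl po rf rmw)))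

/-- `scb = po ∪ (po|≠loc;hb;po|≠loc) ∪ hb|loc ∪ co ∪ fr`. -/
def scb (loc : E → Loc) (W Wrlx Erel Eacq F : E → Prop)
    (incl po rf co rmw : E → E → Prop) : E → E → Prop :=
  runion po (runion
    (rcomp (diffLoc loc po)
      (rcomp (hb loc W Wrlx Erel Eacq F incl po rf rmw) (diffLoc loc po)))
    (runion (sameLoc loc (hb loc W Wrlx Erel Eacq F incl po rf rmw))
      (runion co (fr rf co))))

/-- `pscb = ([Esc] ∪ [Fsc];hb^?);scb;([Esc] ∪ hb^?;[Fsc])`. -/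
def pscb (loc : E → Loc) (W Wrlx Erel Eacq F Esc Fsc : E → Prop)
    (incl po rf co rmw : E → E → Prop) : E → E → Prop :=
  rcomp (runion (rid Esc)
      (rcomp (rid Fsc) (ropt (hb loc W Wrlx Erel Eacq F incl po rf rmw))))
    (rcomp (scb loc W Wrlx Erel Eacq F incl po rf co rmw)
      (runion (rid Esc)
        (rcomp (ropt (hb loc W Wrlx Erel Eacq F incl po rf rmw)) (rid Fsc))))

/-- `pscf = [Fsc];(hb ∪ hb;eco;hb);[Fsc]`. -/
def pscf (loc : E → Loc) (W Wrlx Erel Eacq F Fsc : E → Prop)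
    (incl po rf co rmw : E → E → Prop) : E → E → Prop :=
  rcomp (rid Fsc)
    (rcomp (runion (hb loc W Wrlx Erel Eacq F incl po rf rmw)
        (rcomp (hb loc W Wrlx Erel Eacq F incl po rf rmw)
          (rcomp (eco rf co) (hb loc W Wrlx Erel Eacq F incl po rf rmw))))
      (rid Fsc))

/-- `psc = pscb ∪ pscf`. -/
def psc (loc : E → Loc) (W Wrlx Erel Eacq F Esc Fsc : E → Prop)
    (incl po rf co rmw : E → E → Prop) : E → E → Prop :=
  runion (pscb loc W Wrlx Erel Eacq F Esc Fsc incl po rf co rmw)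
    (pscf loc W Wrlx Erel Eacq F Fsc incl po rf co rmw)

end SRC11

namespace SRC11

variable {E Loc : Type*}

def Sub (r s : E → E → Prop) : Prop := ∀ a b, r a b → s a b

theorem sub_rcomp {r r' s s' : E → E → Prop} (h1 : Sub r r') (h2 : Sub s s') :
    Sub (rcomp r s) (rcomp r' s') := fun a c ⟨b, hab, hbc⟩ => ⟨b, h1 _ _ hab, h2 _ _ hbc⟩

theorem sub_runion {r r' s s' : E → E → Prop} (h1 : Sub r r') (h2 : Sub s s') :
    Sub (runion r s) (runion r' s') := fun a b h => h.imp (h1 a b) (h2 a b)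

theorem sub_rinter {r r' s s' : E → E → Prop} (h1 : Sub r r') (h2 : Sub s s') :
    Sub (rinter r s) (rinter r' s') := fun a b h => ⟨h1 a b h.1, h2 a b h.2⟩

theorem sub_rinv {r r' : E → E → Prop} (h1 : Sub r r') : Sub (rinv r) (rinv r') :=
  fun a b h => h1 b a h

theorem sub_ropt {r r' : E → E → Prop} (h1 : Sub r r') : Sub (ropt r) (ropt r') :=
  fun a b h => h.imp id (h1 a b)

theorem sub_rtrans {r r' : E → E → Prop} (h1 : Sub r r') : Sub (rtrans r) (rtrans r') :=
  fun a b h => Relation.TransGen.mono h1 a b h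

theorem sub_rstar {r r' : E → E → Prop} (h1 : Sub r r') : Sub (rstar r) (rstar r') :=
  fun a b h => Relation.ReflTransGen.mono h1 a b h

theorem sub_refl (r : E → E → Prop) : Sub r r := fun _ _ h => h

theorem sub_sameLoc (loc : E → Loc) {r r' : E → E → Prop} (h1 : Sub r r') :
    Sub (sameLoc loc r) (sameLoc loc r') := fun a b h => ⟨h1 a b h.1, h.2⟩

theorem sub_diffLoc (loc : E → Loc) {r r' : E → E → Prop} (h1 : Sub r r') :
    Sub (diffLoc loc r) (diffLoc loc r') := fun a b h => ⟨h1 a b h.1, h.2⟩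

theorem sub_fr {rf rf' co co' : E → E → Prop} (h1 : Sub rf rf') (h2 : Sub co co') :
    Sub (fr rf co) (fr rf' co') := sub_rcomp (sub_rinv h1) h2

theorem sub_eco {rf rf' co co' : E → E → Prop} (h1 : Sub rf rf') (h2 : Sub co co') :
    Sub (eco rf co) (eco rf' co') :=
  sub_rtrans (sub_runion h1 (sub_runion h2 (sub_fr h1 h2)))

theorem sub_rseq (loc : E → Loc) (W Wrlx : E → Prop) (incl : E → E → Prop)
    {po po' rf rf' rmw rmw' : E → E → Prop}
    (hpo : Sub po po') (hrf : Sub rf rf') (hrmw : Sub rmw rmw') :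
    Sub (rseq loc W Wrlx incl po rf rmw) (rseq loc W Wrlx incl po' rf' rmw') :=
  sub_rcomp (sub_refl _) (sub_rcomp (sub_ropt (sub_sameLoc loc hpo))
    (sub_rcomp (sub_refl _) (sub_rstar (sub_rcomp (sub_rinter (sub_refl _) hrf) hrmw))))

theorem sub_prel (Erel F : E → Prop) {po po' : E → E → Prop} (hpo : Sub po po') :
    Sub (prel Erel F po) (prel Erel F po') :=
  sub_rcomp (sub_refl _) (sub_ropt (sub_rcomp (sub_refl _) hpo))

theorem sub_pacq (Eacq F : E → Prop) {po po' : E → E → Prop} (hpo : Sub po po') :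
    Sub (pacq Eacq F po) (pacq Eacq F po') :=
  sub_rcomp (sub_ropt (sub_rcomp hpo (sub_refl _))) (sub_refl _)

theorem sub_sw (loc : E → Loc) (W Wrlx Erel Eacq F : E → Prop) (incl : E → E → Prop)
    {po po' rf rf' rmw rmw' : E → E → Prop}
    (hpo : Sub po po') (hrf : Sub rf rf') (hrmw : Sub rmw rmw') :
    Sub (sw loc W Wrlx Erel Eacq F incl po rf rmw)
      (sw loc W Wrlx Erel Eacq F incl po' rf' rmw') :=
  sub_rcomp (sub_prel _ _ hpo) (sub_rcomp (sub_rseq _ _ _ _ hpo hrf hrmw)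
    (sub_rcomp (sub_rinter (sub_refl _) hrf) (sub_pacq _ _ hpo)))

theorem sub_hb (loc : E → Loc) (W Wrlx Erel Eacq F : E → Prop) (incl : E → E → Prop)
    {po po' rf rf' rmw rmw' : E → E → Prop}
    (hpo : Sub po po') (hrf : Sub rf rf') (hrmw : Sub rmw rmw') :
    Sub (hb loc W Wrlx Erel Eacq F incl po rf rmw)
      (hb loc W Wrlx Erel Eacq F incl po' rf' rmw') :=
  sub_rtrans (sub_runion hpo (sub_rinter (sub_refl _) (sub_sw _ _ _ _ _ _ _ hpo hrf hrmw)))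

theorem sub_scb (loc : E → Loc) (W Wrlx Erel Eacq F : E → Prop) (incl : E → E → Prop)
    {po po' rf rf' co co' rmw rmw' : E → E → Prop}
    (hpo : Sub po po') (hrf : Sub rf rf') (hco : Sub co co') (hrmw : Sub rmw rmw') :
    Sub (scb loc W Wrlx Erel Eacq F incl po rf co rmw)
      (scb loc W Wrlx Erel Eacq F incl po' rf' co' rmw') :=
  sub_runion hpo (sub_runion
    (sub_rcomp (sub_diffLoc loc hpo)
      (sub_rcomp (sub_hb _ _ _ _ _ _ _ hpo hrf hrmw) (sub_diffLoc loc hpo)))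
    (sub_runion (sub_sameLoc loc (sub_hb _ _ _ _ _ _ _ hpo hrf hrmw))
      (sub_runion hco (sub_fr hrf hco))))

theorem sub_psc (loc : E → Loc) (W Wrlx Erel Eacq F Esc Fsc : E → Prop) (incl : E → E → Prop)
    {po po' rf rf' co co' rmw rmw' : E → E → Prop}
    (hpo : Sub po po') (hrf : Sub rf rf') (hco : Sub co co') (hrmw : Sub rmw rmw') :
    Sub (psc loc W Wrlx Erel Eacq F Esc Fsc incl po rf co rmw)
      (psc loc W Wrlx Erel Eacq F Esc Fsc incl po' rf' co' rmw') := by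
  have hhb := sub_hb loc W Wrlx Erel Eacq F incl hpo hrf hrmw
  exact sub_runion
    (sub_rcomp (sub_runion (sub_refl _) (sub_rcomp (sub_refl _) (sub_ropt hhb)))
      (sub_rcomp (sub_scb _ _ _ _ _ _ _ hpo hrf hco hrmw)
        (sub_runion (sub_refl _) (sub_rcomp (sub_ropt hhb) (sub_refl _)))))
    (sub_rcomp (sub_refl _)
      (sub_rcomp (sub_runion hhb (sub_rcomp hhb (sub_rcomp (sub_eco hrf hco) hhb)))
        (sub_refl _)))

end SRC11

/-- a sub-execution of an SRC11-consistent execution is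
SRC11-consistent (restriction case of Lemma A.1). -/
theorem subexecution_consistent {E Loc : Type*} (loc : E → Loc)
    (W Wrlx Erel Eacq F Esc Fsc : E → Prop) (incl : E → E → Prop)
    (po po' rf rf' co co' rmw rmw' : E → E → Prop)
    (hpo : ∀ a b, po a b → po' a b)
    (hrf : ∀ a b, rf a b → rf' a b)
    (hco : ∀ a b, co a b → co' a b)
    (hrmw : ∀ a b, rmw a b → rmw' a b)
    -- (Coherence) for the primed execution
    (hCoh' : SRC11.Irrefl (SRC11.rcomp
      (SRC11.hb loc W Wrlx Erel Eacq F incl po' rf' rmw')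
      (SRC11.ropt (SRC11.eco rf' co'))))
    -- (Atomicity) for the primed execution
    (hAt' : ∀ a b, ¬ SRC11.rinter rmw'
      (SRC11.rcomp (SRC11.fr rf' co') co') a b)
    -- (SC) for the primed execution
    (hSC' : SRC11.Acyclic (SRC11.rinter incl
      (SRC11.psc loc W Wrlx Erel Eacq F Esc Fsc incl po' rf' co' rmw')))
    -- (No-Thin-Air) for the primed execution
    (hNTA' : SRC11.Acyclic (SRC11.runion po' rf')) :
    SRC11.Irrefl (SRC11.rcomp
      (SRC11.hb loc W Wrlx Erel Eacq F incl po rf rmw)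
      (SRC11.ropt (SRC11.eco rf co))) ∧
    (∀ a b, ¬ SRC11.rinter rmw (SRC11.rcomp (SRC11.fr rf co) co) a b) ∧
    SRC11.Acyclic (SRC11.rinter incl
      (SRC11.psc loc W Wrlx Erel Eacq F Esc Fsc incl po rf co rmw)) ∧
    SRC11.Acyclic (SRC11.runion po rf) := by
  have hhb := SRC11.sub_hb loc W Wrlx Erel Eacq F incl hpo hrf hrmw
  refine ⟨?_, ?_, ?_, ?_⟩
  · intro a ⟨b, h1, h2⟩
    exact hCoh' a ⟨b, hhb a b h1, SRC11.sub_ropt (SRC11.sub_eco hrf hco) b a h2⟩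
  · intro a b h
    exact hAt' a b (SRC11.sub_rinter hrmw (SRC11.sub_rcomp (SRC11.sub_fr hrf hco) hco) a b h)
  · intro a h
    exact hSC' a (SRC11.sub_rtrans (SRC11.sub_rinter (SRC11.sub_refl _)
      (SRC11.sub_psc loc W Wrlx Erel Eacq F Esc Fsc incl hpo hrf hco hrmw)) a a h)
  · intro a h
    exact hNTA' a (SRC11.sub_rtrans (SRC11.sub_runion hpo hrf) a a h)
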